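/- Let n ≥ 2, B ⊂ ℝ^n the open unit ball, and u : B → ℝ, u(x) = −√(1 − |x|), whose gradient at x ≠ 0 is ∇u(x) = x/(2|x|√(1−|x|)). Then F_1^*(x, −∇u(x))² = (1+|x|)²/(4(1−|x|)) for x ≠ 0, and ∫_B F_1^*(x, −∇u(x))² dx = +∞ (the integrand is not Lebesgue integrable on B). -/

import Mathlib

open Metric MeasureTheory

/-- The polar transform of the Funk metric: `F_1^*(x,y) = |y| - ⟨x,y⟩`. -/
noncomputable def F1Star (n : ℕ) (x y : EuclideanSpace ℝ (Fin n)) : ℝ :=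
  ‖y‖ - (inner ℝ x y : ℝ)

lemma f1star_formula (n : ℕ) (x : EuclideanSpace ℝ (Fin n)) (hx : ‖x‖ < 1) (hx0 : x ≠ 0) :
    (F1Star n x (-((2 * ‖x‖ * Real.sqrt (1 - ‖x‖))⁻¹ • x))) ^ 2 =
      (1 + ‖x‖) ^ 2 / (4 * (1 - ‖x‖)) := by
  have hs0 : 0 < ‖x‖ := norm_pos_iff.mpr hx0
  set s : ℝ := ‖x‖ with hs
  have h1s : (0:ℝ) < 1 - s := by linarith
  have ht : 0 < Real.sqrt (1 - s) := Real.sqrt_pos.mpr h1s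
  have ht2 : Real.sqrt (1 - s) ^ 2 = 1 - s := Real.sq_sqrt h1s.le
  have hc : 0 < 2 * s * Real.sqrt (1 - s) := by positivity
  have hnorm : ‖-((2 * s * Real.sqrt (1 - s))⁻¹ • x)‖ =
      (2 * s * Real.sqrt (1 - s))⁻¹ * s := by
    rw [norm_neg, norm_smul, Real.norm_eq_abs, abs_of_pos (by positivity)]
  have hinner : (inner ℝ x (-((2 * s * Real.sqrt (1 - s))⁻¹ • x)) : ℝ) =
      -((2 * s * Real.sqrt (1 - s))⁻¹ * s ^ 2) := by
    rw [inner_neg_right, real_inner_smul_right, real_inner_self_eq_norm_sq]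
  unfold F1Star
  rw [hnorm, hinner]
  have hc' : (2 * s * Real.sqrt (1 - s)) ≠ 0 := ne_of_gt hc
  field_simp
  rw [ht2]
  ring

theorem stmt_11 (n : ℕ) (hn : 2 ≤ n) :
    (∀ x : EuclideanSpace ℝ (Fin n), x ∈ ball (0 : EuclideanSpace ℝ (Fin n)) 1 → x ≠ 0 →
      (F1Star n x (-((2 * ‖x‖ * Real.sqrt (1 - ‖x‖))⁻¹ • x))) ^ 2 =
        (1 + ‖x‖) ^ 2 / (4 * (1 - ‖x‖))) ∧
    (∫⁻ x in ball (0 : EuclideanSpace ℝ (Fin n)) 1,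
      ENNReal.ofReal ((F1Star n x (-((2 * ‖x‖ * Real.sqrt (1 - ‖x‖))⁻¹ • x))) ^ 2)) = ⊤ ∧
    ¬ IntegrableOn
        (fun x : EuclideanSpace ℝ (Fin n) =>
          (F1Star n x (-((2 * ‖x‖ * Real.sqrt (1 - ‖x‖))⁻¹ • x))) ^ 2)
        (ball (0 : EuclideanSpace ℝ (Fin n)) 1) := by
  have hpt : ∀ x : EuclideanSpace ℝ (Fin n), x ∈ ball (0 : EuclideanSpace ℝ (Fin n)) 1 → x ≠ 0 →
      (F1Star n x (-((2 * ‖x‖ * Real.sqrt (1 - ‖x‖))⁻¹ • x))) ^ 2 =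
        (1 + ‖x‖) ^ 2 / (4 * (1 - ‖x‖)) := by
    intro x hx hx0
    exact f1star_formula n x (by simpa using mem_ball_zero_iff.mp hx) hx0
  haveI : Nonempty (Fin n) := ⟨⟨0, by omega⟩⟩
  haveI : Nontrivial (EuclideanSpace ℝ (Fin n)) := inferInstance
  -- dimension
  have hdim : Module.finrank ℝ (EuclideanSpace ℝ (Fin n)) = n := by
    simp [finrank_euclideanSpace]
  set V : ENNReal := volume (ball (0 : EuclideanSpace ℝ (Fin n)) 1) with hV
  have hV0 : V ≠ 0 := (measure_ball_pos volume 0 one_pos).ne'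
  have hVtop : V ≠ ⊤ := (measure_ball_lt_top).ne
  -- radii and annuli
  set r : ℕ → ℝ := fun k => 1 - (1/2 : ℝ) ^ (k + 1) with hr
  have hr_half : ∀ k, (1/2 : ℝ) ≤ r k := by
    intro k
    have : (1/2 : ℝ) ^ (k+1) ≤ (1/2 : ℝ) ^ 1 :=
      pow_le_pow_of_le_one (by norm_num) (by norm_num) (by omega)
    simp only [hr]; norm_num at this ⊢; linarith
  have hr_lt_one : ∀ k, r k < 1 := by
    intro k; simp only [hr]
    have : (0:ℝ) < (1/2 : ℝ) ^ (k+1) := by positivity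
    linarith
  have hr_pos : ∀ k, (0:ℝ) < r k := fun k => lt_of_lt_of_le (by norm_num) (hr_half k)
  have hr_mono : ∀ k, r k < r (k+1) := by
    intro k; simp only [hr]
    have : (1/2 : ℝ) ^ (k+1+1) < (1/2 : ℝ) ^ (k+1) :=
      pow_lt_pow_right_of_lt_one₀ (by norm_num) (by norm_num) (by omega)
    linarith
  set A : ℕ → Set (EuclideanSpace ℝ (Fin n)) :=
    fun k => ball (0 : EuclideanSpace ℝ (Fin n)) (r (k+1)) \ ball 0 (r k) with hA
  have hAmeas : ∀ k, MeasurableSet (A k) :=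
    fun k => measurableSet_ball.diff measurableSet_ball
  have hAsub : ∀ k, A k ⊆ ball (0 : EuclideanSpace ℝ (Fin n)) 1 := by
    intro k x hx
    exact ball_subset_ball (hr_lt_one (k+1)).le hx.1
  have hAdisj : Pairwise (Function.onFun Disjoint A) := by
    have key : ∀ i j, i < j → Disjoint (A i) (A j) := by
      intro i j hij
      refine Set.disjoint_left.mpr ?_
      intro x hxi hxj
      have h1 : x ∈ ball (0 : EuclideanSpace ℝ (Fin n)) (r (i+1)) := hxi.1
      have h2 : x ∉ ball (0 : EuclideanSpace ℝ (Fin n)) (r j) := hxj.2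
      have hle : r (i+1) ≤ r j := by
        simp only [hr]
        have : (1/2 : ℝ) ^ (j+1) ≤ (1/2 : ℝ) ^ (i+1+1) :=
          pow_le_pow_of_le_one (by norm_num) (by norm_num) (by omega)
        linarith
      exact h2 (ball_subset_ball hle h1)
    intro i j hij
    rcases lt_or_gt_of_ne hij with h | h
    · exact key i j h
    · exact (key j i h).symm
  -- measure of annulus
  have hmeasA : ∀ k, ENNReal.ofReal ((1/2 : ℝ) ^ (k + n + 1)) * V ≤ volume (A k) := by
    intro k
    have hball : ∀ m, volume (ball (0 : EuclideanSpace ℝ (Fin n)) (r m)) =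
        ENNReal.ofReal (r m ^ n) * V := by
      intro m
      rw [Measure.addHaar_ball volume 0 (hr_pos m).le, hdim]
    have hsub : ball (0 : EuclideanSpace ℝ (Fin n)) (r k) ⊆ ball 0 (r (k+1)) :=
      ball_subset_ball (hr_mono k).le
    have hdiff : volume (A k) =
        volume (ball (0 : EuclideanSpace ℝ (Fin n)) (r (k+1))) -
          volume (ball (0 : EuclideanSpace ℝ (Fin n)) (r k)) :=
      measure_diff hsub measurableSet_ball.nullMeasurableSet measure_ball_lt_top.ne
    rw [hdiff, hball, hball, ← ENNReal.sub_mul (fun _ _ => hVtop),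
      ← ENNReal.ofReal_sub _ (pow_nonneg (hr_pos k).le n)]
    refine mul_le_mul_left (ENNReal.ofReal_le_ofReal ?_) V
    -- r(k+1)^n - r k^n ≥ (r(k+1) - r k) * r k ^ (n-1) ≥ (1/2)^(k+2) * (1/2)^(n-1)
    obtain ⟨m, hm⟩ : ∃ m, n = m + 1 := ⟨n - 1, by omega⟩
    have hgap : r (k+1) - r k = (1/2 : ℝ) ^ (k+2) := by
      simp only [hr]; ring
    have h1 : r k ^ m * r (k+1) ≤ r (k+1) ^ n := by
      rw [hm, pow_succ]
      exact mul_le_mul_of_nonneg_right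
        (pow_le_pow_left₀ (hr_pos k).le (hr_mono k).le m) (hr_pos (k+1)).le
    have h2 : (1/2 : ℝ) ^ (k + n + 1) ≤ (r (k+1) - r k) * r k ^ m := by
      rw [hgap]
      have hrm : (1/2 : ℝ) ^ m ≤ r k ^ m := pow_le_pow_left₀ (by norm_num) (hr_half k) m
      calc (1/2 : ℝ) ^ (k + n + 1) = (1/2)^(k+2) * (1/2)^m := by
            rw [← pow_add]; congr 1; omega
        _ ≤ (1/2)^(k+2) * r k ^ m := by
            exact mul_le_mul_of_nonneg_left hrm (by positivity)
    have h3 : (r (k+1) - r k) * r k ^ m ≤ r (k+1) ^ n - r k ^ n := by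
      have : r k ^ n = r k ^ m * r k := by rw [hm, pow_succ]
      nlinarith [h1]
    exact h2.trans h3
  -- lower bound on integrand on A k
  have hf_lb : ∀ k, ∀ x ∈ A k,
      ENNReal.ofReal ((2:ℝ) ^ (k+1) / 4) ≤
        ENNReal.ofReal ((F1Star n x (-((2 * ‖x‖ * Real.sqrt (1 - ‖x‖))⁻¹ • x))) ^ 2) := by
    intro k x hx
    have hxlt : ‖x‖ < 1 := lt_of_lt_of_le (by simpa using mem_ball_zero_iff.mp hx.1)
      (hr_lt_one (k+1)).le
    have hxge : r k ≤ ‖x‖ := by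
      have := hx.2
      rw [mem_ball_zero_iff] at this
      linarith [not_lt.mp this]
    have hx0 : x ≠ 0 := by
      intro h
      rw [h] at hxge; simp at hxge
      linarith [hr_pos k]
    rw [f1star_formula n x hxlt hx0]
    apply ENNReal.ofReal_le_ofReal
    have h1x : (0:ℝ) < 1 - ‖x‖ := by linarith
    have hub : 1 - ‖x‖ ≤ (1/2 : ℝ) ^ (k+1) := by
      simp only [hr] at hxge; linarith
    have h1 : (1:ℝ) ≤ (1 + ‖x‖) ^ 2 := by nlinarith [norm_nonneg x]
    have h2 : (2:ℝ)^(k+1) / 4 ≤ 1 / (4 * (1 - ‖x‖)) := by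
      rw [div_le_div_iff₀ (by norm_num) (by positivity)]
      have : (2:ℝ)^(k+1) * (1 - ‖x‖) ≤ (2:ℝ)^(k+1) * (1/2)^(k+1) :=
        mul_le_mul_of_nonneg_left hub (by positivity)
      have heq : (2:ℝ)^(k+1) * (1/2:ℝ)^(k+1) = 1 := by
        rw [← mul_pow]; norm_num
      nlinarith
    calc (2:ℝ)^(k+1) / 4 ≤ 1 / (4 * (1 - ‖x‖)) := h2
      _ ≤ (1 + ‖x‖)^2 / (4 * (1 - ‖x‖)) := by gcongr
  set f : EuclideanSpace ℝ (Fin n) → ℝ := fun x =>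
    (F1Star n x (-((2 * ‖x‖ * Real.sqrt (1 - ‖x‖))⁻¹ • x))) ^ 2 with hf
  set c : ENNReal := ENNReal.ofReal ((1/2:ℝ)^n / 4) * V with hcdef
  have hc0 : c ≠ 0 :=
    mul_ne_zero (ENNReal.ofReal_pos.mpr (by positivity)).ne' hV0
  have hterm : ∀ k, c ≤ ∫⁻ x in A k, ENNReal.ofReal (f x) := by
    intro k
    have hpow : (1/2:ℝ)^(k+n+1) = (1/2:ℝ)^(k+1) * (1/2:ℝ)^n := by
      rw [← pow_add]; congr 1; omega
    have hh : (2:ℝ)^(k+1) * (1/2:ℝ)^(k+1) = 1 := by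
      rw [← mul_pow]; norm_num
    have hreal : (2:ℝ)^(k+1)/4 * (1/2:ℝ)^(k+n+1) = (1/2:ℝ)^n / 4 := by
      rw [hpow, div_mul_eq_mul_div, ← mul_assoc, hh, one_mul]
    calc c = ENNReal.ofReal ((2:ℝ)^(k+1)/4 * (1/2:ℝ)^(k+n+1)) * V := by rw [hreal]
      _ = ENNReal.ofReal ((2:ℝ)^(k+1)/4) * (ENNReal.ofReal ((1/2:ℝ)^(k+n+1)) * V) := by
          rw [ENNReal.ofReal_mul (by positivity), mul_assoc]
      _ ≤ ENNReal.ofReal ((2:ℝ)^(k+1)/4) * volume (A k) := mul_le_mul_right (hmeasA k) _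
      _ = ∫⁻ _ in A k, ENNReal.ofReal ((2:ℝ)^(k+1)/4) := (setLIntegral_const _ _).symm
      _ ≤ ∫⁻ x in A k, ENNReal.ofReal (f x) := setLIntegral_mono' (hAmeas k) (hf_lb k)
  have htop : (∫⁻ x in ball (0 : EuclideanSpace ℝ (Fin n)) 1, ENNReal.ofReal (f x)) = ⊤ := by
    have h1 : (⊤ : ENNReal) ≤ ∑' k : ℕ, ∫⁻ x in A k, ENNReal.ofReal (f x) := by
      rw [← ENNReal.tsum_const_eq_top_of_ne_zero (α := ℕ) hc0]
      exact ENNReal.tsum_le_tsum hterm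
    have h2 := lintegral_iUnion (μ := volume) hAmeas hAdisj (fun x => ENNReal.ofReal (f x))
    have h3 : (∫⁻ x in ⋃ k, A k, ENNReal.ofReal (f x)) ≤
        ∫⁻ x in ball (0 : EuclideanSpace ℝ (Fin n)) 1, ENNReal.ofReal (f x) :=
      lintegral_mono_set (Set.iUnion_subset hAsub)
    exact top_unique (h1.trans (h2 ▸ h3))
  refine ⟨hpt, htop, fun hInt => ?_⟩
  have hlt := hInt.lintegral_lt_top
  rw [htop] at hlt
  exact absurd hlt (lt_irrefl _)
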